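/- arXiv:math/0601764 — 11 statements merged into one kernel-verified Lean document; each statement's English description precedes it below -/
import Mathlib

section
/- If smooth functions x₁:ℝ→ℝ and z₁,z₂,z₃:ℝ→ℂ satisfy dx₁/dt = α₁|z₁|² + α₂|z₂|² + α₃|z₃|², dz₁/dt = -α₁x₁z₁ + iβ₁·conj(z₂z₃), dz₂/dt = -α₂x₁z₂ + iβ₂·conj(z₃z₁), dz₃/dt = -α₃x₁z₃ + iβ₃·conj(z₁z₂), where β₁ = α₂-α₃, β₂ = α₃-α₁, β₃ = α₁-α₂, then the function x₁² + |z₁|² + |z₂|² + |z₃|² is constant. -/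
open Complex ComplexConjugate

lemma aux_normSq_deriv (z : ℝ → ℂ) (z' : ℂ) (t : ℝ) (hz : HasDerivAt z z' t) :
    HasDerivAt (fun s => Complex.normSq (z s))
      (2 * ((z t).re * z'.re + (z t).im * z'.im)) t := by
  have hre : HasDerivAt (fun s => (z s).re) z'.re t :=
    (Complex.reCLM.hasFDerivAt.comp_hasDerivAt t hz)
  have him : HasDerivAt (fun s => (z s).im) z'.im t :=
    (Complex.imCLM.hasFDerivAt.comp_hasDerivAt t hz)
  have := (hre.mul hre).add (him.mul him)
  simp only [Complex.normSq_apply]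
  exact this.congr_deriv (by ring)

theorem stmt0 (α₁ α₂ α₃ : ℝ) (hα : α₁ + α₂ + α₃ = 0)
    (x₁ : ℝ → ℝ) (z₁ z₂ z₃ : ℝ → ℂ)
    (hx : ∀ t, HasDerivAt x₁
      (α₁ * ‖z₁ t‖ ^ 2 + α₂ * ‖z₂ t‖ ^ 2
        + α₃ * ‖z₃ t‖ ^ 2) t)
    (h1 : ∀ t, HasDerivAt z₁ (-(α₁ : ℂ) * (x₁ t : ℂ) * z₁ t
      + I * ((α₂ - α₃ : ℝ) : ℂ) * conj (z₂ t * z₃ t)) t)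
    (h2 : ∀ t, HasDerivAt z₂ (-(α₂ : ℂ) * (x₁ t : ℂ) * z₂ t
      + I * ((α₃ - α₁ : ℝ) : ℂ) * conj (z₃ t * z₁ t)) t)
    (h3 : ∀ t, HasDerivAt z₃ (-(α₃ : ℂ) * (x₁ t : ℂ) * z₃ t
      + I * ((α₁ - α₂ : ℝ) : ℂ) * conj (z₁ t * z₂ t)) t) :
    ∀ t, x₁ t ^ 2 + ‖z₁ t‖ ^ 2 + ‖z₂ t‖ ^ 2
        + ‖z₃ t‖ ^ 2
      = x₁ 0 ^ 2 + ‖z₁ 0‖ ^ 2 + ‖z₂ 0‖ ^ 2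
        + ‖z₃ 0‖ ^ 2 := by
  have key : ∀ t, HasDerivAt (fun s => x₁ s ^ 2 + Complex.normSq (z₁ s)
      + Complex.normSq (z₂ s) + Complex.normSq (z₃ s)) 0 t := by
    intro t
    have H1 := aux_normSq_deriv z₁ _ t (h1 t)
    have H2 := aux_normSq_deriv z₂ _ t (h2 t)
    have H3 := aux_normSq_deriv z₃ _ t (h3 t)
    have Hx : HasDerivAt (fun s => x₁ s ^ 2)
        (2 * x₁ t ^ 1 * (α₁ * ‖z₁ t‖ ^ 2 + α₂ * ‖z₂ t‖ ^ 2
          + α₃ * ‖z₃ t‖ ^ 2)) t := (hx t).pow 2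
    have := ((Hx.add H1).add H2).add H3
    refine this.congr_deriv ?_
    simp only [Complex.sq_norm, Complex.normSq_apply, Complex.add_re, Complex.add_im,
      Complex.mul_re, Complex.mul_im, Complex.neg_re, Complex.neg_im,
      Complex.ofReal_re, Complex.ofReal_im, Complex.I_re, Complex.I_im,
      Complex.conj_re, Complex.conj_im, map_mul]
    ring
  have hdiff : Differentiable ℝ (fun s => x₁ s ^ 2 + Complex.normSq (z₁ s)
      + Complex.normSq (z₂ s) + Complex.normSq (z₃ s)) :=
    fun t => (key t).differentiableAt
  intro t
  have := is_const_of_deriv_eq_zero hdiff (fun s => (key s).deriv) t 0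
  simpa [Complex.sq_norm, Complex.normSq_apply] using this
end

section
/- If smooth functions x₁:ℝ→ℝ and z₁,z₂,z₃:ℝ→ℂ satisfy dz₁/dt = -α₁x₁z₁ + iβ₁·conj(z₂z₃), dz₂/dt = -α₂x₁z₂ + iβ₂·conj(z₃z₁), dz₃/dt = -α₃x₁z₃ + iβ₃·conj(z₁z₂), where β₁ = α₂-α₃, β₂ = α₃-α₁, β₃ = α₁-α₂ and α₁+α₂+α₃ = 0, then d/dt(z₁z₂z₃) = i(β₁|z₂|²|z₃|² + β₂|z₃|²|z₁|² + β₃|z₁|²|z₂|²), which is purely imaginary, and hence Re(z₁z₂z₃) is constant. -/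
open Complex ComplexConjugate

theorem stmt1 (α₁ α₂ α₃ : ℝ) (hα : α₁ + α₂ + α₃ = 0)
    (x₁ : ℝ → ℝ) (z₁ z₂ z₃ : ℝ → ℂ)
    (h1 : ∀ t, HasDerivAt z₁ (-(α₁ : ℂ) * (x₁ t : ℂ) * z₁ t
      + I * ((α₂ - α₃ : ℝ) : ℂ) * conj (z₂ t * z₃ t)) t)
    (h2 : ∀ t, HasDerivAt z₂ (-(α₂ : ℂ) * (x₁ t : ℂ) * z₂ t
      + I * ((α₃ - α₁ : ℝ) : ℂ) * conj (z₃ t * z₁ t)) t)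
    (h3 : ∀ t, HasDerivAt z₃ (-(α₃ : ℂ) * (x₁ t : ℂ) * z₃ t
      + I * ((α₁ - α₂ : ℝ) : ℂ) * conj (z₁ t * z₂ t)) t) :
    (∀ t, HasDerivAt (fun s => z₁ s * z₂ s * z₃ s)
      (I * (((α₂ - α₃) * ‖z₂ t‖ ^ 2 * ‖z₃ t‖ ^ 2
        + (α₃ - α₁) * ‖z₃ t‖ ^ 2 * ‖z₁ t‖ ^ 2
        + (α₁ - α₂) * ‖z₁ t‖ ^ 2 * ‖z₂ t‖ ^ 2 : ℝ) : ℂ)) t)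
    ∧ (∀ t, (z₁ t * z₂ t * z₃ t).re = (z₁ 0 * z₂ 0 * z₃ 0).re) := by
  have hc : (α₁ : ℂ) + α₂ + α₃ = 0 := by exact_mod_cast congrArg (Complex.ofReal) hα
  have key : ∀ t, HasDerivAt (fun s => z₁ s * z₂ s * z₃ s)
      (I * (((α₂ - α₃) * ‖z₂ t‖ ^ 2 * ‖z₃ t‖ ^ 2
        + (α₃ - α₁) * ‖z₃ t‖ ^ 2 * ‖z₁ t‖ ^ 2
        + (α₁ - α₂) * ‖z₁ t‖ ^ 2 * ‖z₂ t‖ ^ 2 : ℝ) : ℂ)) t := by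
    intro t
    have h := ((h1 t).mul (h2 t)).mul (h3 t)
    refine h.congr_deriv (Eq.symm ?_)
    have e1 : ((‖z₁ t‖ ^ 2 : ℝ) : ℂ) = conj (z₁ t) * z₁ t := by
      rw [← Complex.normSq_eq_conj_mul_self]; norm_cast; exact Complex.sq_norm _
    have e2 : ((‖z₂ t‖ ^ 2 : ℝ) : ℂ) = conj (z₂ t) * z₂ t := by
      rw [← Complex.normSq_eq_conj_mul_self]; norm_cast; exact Complex.sq_norm _
    have e3 : ((‖z₃ t‖ ^ 2 : ℝ) : ℂ) = conj (z₃ t) * z₃ t := by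
      rw [← Complex.normSq_eq_conj_mul_self]; norm_cast; exact Complex.sq_norm _
    push_cast [Pi.mul_apply, map_mul, e1, e2, e3]
    linear_combination ((x₁ t : ℂ) * z₁ t * z₂ t * z₃ t) * hc
  refine ⟨key, ?_⟩
  have keyre : ∀ t, HasDerivAt (fun s => (z₁ s * z₂ s * z₃ s).re) 0 t := by
    intro t
    exact (Complex.reCLM.hasFDerivAt.comp_hasDerivAt t (key t)).congr_deriv (by simp [← Complex.ofReal_pow])
  intro t
  exact is_const_of_deriv_eq_zero
    (fun s => (keyre s).differentiableAt) (fun s => (keyre s).deriv) t 0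
end

section
/- Let α₁, α₂, α₃ be real numbers with α₁+α₂+α₃ = 0 and α₂ = α₃ (so β₁ = 0, β₂ = α₃-α₁ = -β₃). Suppose x₁:ℝ→ℝ and z₁,z₂,z₃:ℝ→ℂ satisfy the ODE system dx₁/dt = α₁|z₁|² + α₂|z₂|² + α₃|z₃|², dzⱼ/dt = -αⱼx₁zⱼ + iβⱼ·conj(z_k z_l) (cyclic), with z₁ real-valued and x₁² + |z₁|² + |z₂|² + |z₃|² = 1. Then the function |z₁|(x₁² + |z₁|² - 1) is constant. -/
open Complex ComplexConjugate

theorem stmt4 (α₁ α₂ α₃ : ℝ) (hα : α₁ + α₂ + α₃ = 0) (hα23 : α₂ = α₃)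
    (x₁ : ℝ → ℝ) (z₁ z₂ z₃ : ℝ → ℂ)
    (hx : ∀ t, HasDerivAt x₁
      (α₁ * ‖z₁ t‖ ^ 2 + α₂ * ‖z₂ t‖ ^ 2
        + α₃ * ‖z₃ t‖ ^ 2) t)
    (h1 : ∀ t, HasDerivAt z₁ (-(α₁ : ℂ) * (x₁ t : ℂ) * z₁ t
      + I * ((α₂ - α₃ : ℝ) : ℂ) * conj (z₂ t * z₃ t)) t)
    (h2 : ∀ t, HasDerivAt z₂ (-(α₂ : ℂ) * (x₁ t : ℂ) * z₂ t
      + I * ((α₃ - α₁ : ℝ) : ℂ) * conj (z₃ t * z₁ t)) t)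
    (h3 : ∀ t, HasDerivAt z₃ (-(α₃ : ℂ) * (x₁ t : ℂ) * z₃ t
      + I * ((α₁ - α₂ : ℝ) : ℂ) * conj (z₁ t * z₂ t)) t)
    (hreal : ∀ t, (z₁ t).im = 0)
    (hnorm : ∀ t, x₁ t ^ 2 + ‖z₁ t‖ ^ 2 + ‖z₂ t‖ ^ 2
      + ‖z₃ t‖ ^ 2 = 1) :
    ∀ t, ‖z₁ t‖ * (x₁ t ^ 2 + ‖z₁ t‖ ^ 2 - 1)
      = ‖z₁ 0‖ * (x₁ 0 ^ 2 + ‖z₁ 0‖ ^ 2 - 1) := by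
  -- y is the real part of z₁
  set Y : ℝ → ℝ := fun t => (z₁ t).re with hY
  have habs : ∀ t, ‖z₁ t‖ = |Y t| := by
    intro t
    have : z₁ t = ((Y t : ℝ) : ℂ) := by
      apply Complex.ext <;> simp [hY, hreal t]
    rw [this, Complex.norm_real, Real.norm_eq_abs]
  have hy : ∀ t, HasDerivAt Y (-α₁ * x₁ t * Y t) t := by
    intro t
    have h := (Complex.reCLM.hasFDerivAt.comp_hasDerivAt t (h1 t))
    have he : Complex.reCLM (-(α₁ : ℂ) * (x₁ t : ℂ) * z₁ t
        + I * ((α₂ - α₃ : ℝ) : ℂ) * conj (z₂ t * z₃ t)) = -α₁ * x₁ t * Y t := by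
      rw [hα23]
      simp [Complex.add_re, Complex.mul_re, hY]
    rw [he] at h
    exact h
  -- the conserved quantity
  set G : ℝ → ℝ := fun t => Y t * (x₁ t ^ 2 + Y t ^ 2 - 1) with hG
  have hGd : ∀ t, HasDerivAt G 0 t := by
    intro t
    have hA : HasDerivAt (fun t => x₁ t ^ 2 + Y t ^ 2 - 1)
        (2 * x₁ t ^ 1 * (α₁ * ‖z₁ t‖ ^ 2 + α₂ * ‖z₂ t‖ ^ 2
          + α₃ * ‖z₃ t‖ ^ 2) + 2 * Y t ^ 1 * (-α₁ * x₁ t * Y t)) t :=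
      (((hx t).pow 2).add ((hy t).pow 2)).sub_const 1
    have h := (hy t).mul hA
    refine h.congr_deriv ?_
    have hz1 : ‖z₁ t‖ ^ 2 = Y t ^ 2 := by
      rw [habs t, _root_.sq_abs]
    have hn := hnorm t
    rw [hz1] at hn
    have hα' : α₁ = -2 * α₂ := by linarith
    have hs : ‖z₃ t‖ ^ 2 = 1 - x₁ t ^ 2 - Y t ^ 2 - ‖z₂ t‖ ^ 2 := by
      linarith
    rw [hz1, hs, hα', hα23]
    ring
  have hGc : ∀ t, G t = G 0 := by
    intro t
    have hd : Differentiable ℝ G := fun t => (hGd t).differentiableAt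
    have := is_const_of_deriv_eq_zero hd (fun t => (hGd t).deriv) t 0
    exact this
  have key : ∀ t, ‖z₁ t‖ * (x₁ t ^ 2 + ‖z₁ t‖ ^ 2 - 1) = -|G t| := by
    intro t
    have hz1 : ‖z₁ t‖ ^ 2 = Y t ^ 2 := by rw [habs t, _root_.sq_abs]
    have hle : x₁ t ^ 2 + Y t ^ 2 - 1 ≤ 0 := by
      have hn := hnorm t
      rw [hz1] at hn
      nlinarith [sq_nonneg (‖z₂ t‖), sq_nonneg (‖z₃ t‖)]
    rw [habs t, _root_.sq_abs, hG]
    rw [abs_mul, abs_of_nonpos hle]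
    ring
  intro t
  rw [key t, key 0, hGc t]
end

section
/- If z₁, z₂, z₃, z₄:ℝ→ℂ are differentiable functions satisfying dz₁/dt = z₁(|z₁|²+|z₂|²+|z₃|²-|z₄|²) + 2(conj(z₁z₄-z₂z₃)+z₂z₃)·conj(z₄), dz₂/dt = z₂(|z₄|²+|z₁|²+|z₂|²-|z₃|²) - 2(conj(z₁z₄-z₂z₃)-z₁z₄)·conj(z₃), dz₃/dt = z₃(|z₃|²+|z₄|²+|z₁|²-|z₂|²) - 2(conj(z₁z₄-z₂z₃)-z₁z₄)·conj(z₂), dz₄/dt = z₄(|z₂|²+|z₃|²+|z₄|²-|z₁|²) + 2(conj(z₁z₄-z₂z₃)+z₂z₃)·conj(z₁), then d/dt Im(z₁z₄-z₂z₃) = -2(|z₁|²+|z₂|²+|z₃|²+|z₄|²)·Im(z₁z₄-z₂z₃). -/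
open Complex ComplexConjugate

theorem stmt6
    (z₁ z₂ z₃ z₄ : ℝ → ℂ)
    (h1 : ∀ t, HasDerivAt z₁
      (z₁ t * ((‖z₁ t‖ ^ 2 + ‖z₂ t‖ ^ 2
          + ‖z₃ t‖ ^ 2 - ‖z₄ t‖ ^ 2 : ℝ) : ℂ)
        + 2 * (conj (z₁ t * z₄ t - z₂ t * z₃ t) + z₂ t * z₃ t) * conj (z₄ t)) t)
    (h2 : ∀ t, HasDerivAt z₂
      (z₂ t * ((‖z₄ t‖ ^ 2 + ‖z₁ t‖ ^ 2
          + ‖z₂ t‖ ^ 2 - ‖z₃ t‖ ^ 2 : ℝ) : ℂ)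
        - 2 * (conj (z₁ t * z₄ t - z₂ t * z₃ t) - z₁ t * z₄ t) * conj (z₃ t)) t)
    (h3 : ∀ t, HasDerivAt z₃
      (z₃ t * ((‖z₃ t‖ ^ 2 + ‖z₄ t‖ ^ 2
          + ‖z₁ t‖ ^ 2 - ‖z₂ t‖ ^ 2 : ℝ) : ℂ)
        - 2 * (conj (z₁ t * z₄ t - z₂ t * z₃ t) - z₁ t * z₄ t) * conj (z₂ t)) t)
    (h4 : ∀ t, HasDerivAt z₄
      (z₄ t * ((‖z₂ t‖ ^ 2 + ‖z₃ t‖ ^ 2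
          + ‖z₄ t‖ ^ 2 - ‖z₁ t‖ ^ 2 : ℝ) : ℂ)
        + 2 * (conj (z₁ t * z₄ t - z₂ t * z₃ t) + z₂ t * z₃ t) * conj (z₁ t)) t) :
    ∀ t, HasDerivAt (fun s => (z₁ s * z₄ s - z₂ s * z₃ s).im)
      (-2 * (‖z₁ t‖ ^ 2 + ‖z₂ t‖ ^ 2
          + ‖z₃ t‖ ^ 2 + ‖z₄ t‖ ^ 2)
        * (z₁ t * z₄ t - z₂ t * z₃ t).im) t := by
  intro t
  have hu := (((h1 t).mul (h4 t)).sub ((h2 t).mul (h3 t)))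
  have key : (z₁ t * ((‖z₁ t‖ ^ 2 + ‖z₂ t‖ ^ 2
          + ‖z₃ t‖ ^ 2 - ‖z₄ t‖ ^ 2 : ℝ) : ℂ)
        + 2 * (conj (z₁ t * z₄ t - z₂ t * z₃ t) + z₂ t * z₃ t) * conj (z₄ t)) * z₄ t
      + z₁ t * (z₄ t * ((‖z₂ t‖ ^ 2 + ‖z₃ t‖ ^ 2
          + ‖z₄ t‖ ^ 2 - ‖z₁ t‖ ^ 2 : ℝ) : ℂ)
        + 2 * (conj (z₁ t * z₄ t - z₂ t * z₃ t) + z₂ t * z₃ t) * conj (z₁ t))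
      - ((z₂ t * ((‖z₄ t‖ ^ 2 + ‖z₁ t‖ ^ 2
          + ‖z₂ t‖ ^ 2 - ‖z₃ t‖ ^ 2 : ℝ) : ℂ)
        - 2 * (conj (z₁ t * z₄ t - z₂ t * z₃ t) - z₁ t * z₄ t) * conj (z₃ t)) * z₃ t
      + z₂ t * (z₃ t * ((‖z₃ t‖ ^ 2 + ‖z₄ t‖ ^ 2
          + ‖z₁ t‖ ^ 2 - ‖z₂ t‖ ^ 2 : ℝ) : ℂ)
        - 2 * (conj (z₁ t * z₄ t - z₂ t * z₃ t) - z₁ t * z₄ t) * conj (z₂ t)))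
      = 2 * ((‖z₁ t‖ ^ 2 + ‖z₂ t‖ ^ 2
          + ‖z₃ t‖ ^ 2 + ‖z₄ t‖ ^ 2 : ℝ) : ℂ)
        * conj (z₁ t * z₄ t - z₂ t * z₃ t) := by
    have e1 : ((‖z₁ t‖ : ℝ) : ℂ) ^ 2 = z₁ t * conj (z₁ t) := by
      rw [← Complex.ofReal_pow, Complex.sq_norm, ← Complex.mul_conj]
    have e2 : ((‖z₂ t‖ : ℝ) : ℂ) ^ 2 = z₂ t * conj (z₂ t) := by
      rw [← Complex.ofReal_pow, Complex.sq_norm, ← Complex.mul_conj]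
    have e3 : ((‖z₃ t‖ : ℝ) : ℂ) ^ 2 = z₃ t * conj (z₃ t) := by
      rw [← Complex.ofReal_pow, Complex.sq_norm, ← Complex.mul_conj]
    have e4 : ((‖z₄ t‖ : ℝ) : ℂ) ^ 2 = z₄ t * conj (z₄ t) := by
      rw [← Complex.ofReal_pow, Complex.sq_norm, ← Complex.mul_conj]
    push_cast
    rw [e1, e2, e3, e4]
    simp only [map_sub, map_mul]
    ring
  rw [key] at hu
  have him := Complex.imCLM.hasFDerivAt.comp_hasDerivAt t hu
  have heq : Complex.imCLM (2 * ((‖z₁ t‖ ^ 2 + ‖z₂ t‖ ^ 2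
          + ‖z₃ t‖ ^ 2 + ‖z₄ t‖ ^ 2 : ℝ) : ℂ)
        * conj (z₁ t * z₄ t - z₂ t * z₃ t))
      = -2 * (‖z₁ t‖ ^ 2 + ‖z₂ t‖ ^ 2
          + ‖z₃ t‖ ^ 2 + ‖z₄ t‖ ^ 2)
        * (z₁ t * z₄ t - z₂ t * z₃ t).im := by
    simp [Complex.mul_im, Complex.conj_im, Complex.conj_re, ← Complex.ofReal_pow]
    ring
  rw [heq] at him
  exact him
end

section
/- Under the SU(2)-invariant Cayley ODE system (dz₁/dt = z₁(|z₁|²+|z₂|²+|z₃|²-|z₄|²) + 2(conj(z₁z₄-z₂z₃)+z₂z₃)·conj(z₄), etc.), the real function u = |z₁|² - |z₂|² + |z₃|² - |z₄|² satisfies du/dt = 2(|z₁|²+|z₂|²+|z₃|²+|z₄|²)u. -/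
open Complex ComplexConjugate

lemma hasDerivAt_abs_sq {z : ℝ → ℂ} {w : ℂ} {t : ℝ} (h : HasDerivAt z w t) :
    HasDerivAt (fun s => ‖z s‖ ^ 2)
      (2 * ((z t).re * w.re + (z t).im * w.im)) t := by
  have hre : HasDerivAt (fun s => (z s).re) w.re t := by
    exact Complex.reCLM.hasFDerivAt.comp_hasDerivAt t h
  have him : HasDerivAt (fun s => (z s).im) w.im t := by
    exact Complex.imCLM.hasFDerivAt.comp_hasDerivAt t h
  have key : (fun s => ‖z s‖ ^ 2)
      = fun s => (z s).re * (z s).re + (z s).im * (z s).im := by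
    funext s; rw [Complex.sq_norm, Complex.normSq_apply]
  rw [key]
  refine ((hre.mul hre).add (him.mul him)).congr_deriv ?_
  ring


theorem stmt7
    (z₁ z₂ z₃ z₄ : ℝ → ℂ)
    (h1 : ∀ t, HasDerivAt z₁
      (z₁ t * ((‖z₁ t‖ ^ 2 + ‖z₂ t‖ ^ 2
          + ‖z₃ t‖ ^ 2 - ‖z₄ t‖ ^ 2 : ℝ) : ℂ)
        + 2 * (conj (z₁ t * z₄ t - z₂ t * z₃ t) + z₂ t * z₃ t) * conj (z₄ t)) t)
    (h2 : ∀ t, HasDerivAt z₂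
      (z₂ t * ((‖z₄ t‖ ^ 2 + ‖z₁ t‖ ^ 2
          + ‖z₂ t‖ ^ 2 - ‖z₃ t‖ ^ 2 : ℝ) : ℂ)
        - 2 * (conj (z₁ t * z₄ t - z₂ t * z₃ t) - z₁ t * z₄ t) * conj (z₃ t)) t)
    (h3 : ∀ t, HasDerivAt z₃
      (z₃ t * ((‖z₃ t‖ ^ 2 + ‖z₄ t‖ ^ 2
          + ‖z₁ t‖ ^ 2 - ‖z₂ t‖ ^ 2 : ℝ) : ℂ)
        - 2 * (conj (z₁ t * z₄ t - z₂ t * z₃ t) - z₁ t * z₄ t) * conj (z₂ t)) t)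
    (h4 : ∀ t, HasDerivAt z₄
      (z₄ t * ((‖z₂ t‖ ^ 2 + ‖z₃ t‖ ^ 2
          + ‖z₄ t‖ ^ 2 - ‖z₁ t‖ ^ 2 : ℝ) : ℂ)
        + 2 * (conj (z₁ t * z₄ t - z₂ t * z₃ t) + z₂ t * z₃ t) * conj (z₁ t)) t) :
    ∀ t, HasDerivAt (fun s => ‖z₁ s‖ ^ 2 - ‖z₂ s‖ ^ 2
        + ‖z₃ s‖ ^ 2 - ‖z₄ s‖ ^ 2)
      (2 * (‖z₁ t‖ ^ 2 + ‖z₂ t‖ ^ 2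
          + ‖z₃ t‖ ^ 2 + ‖z₄ t‖ ^ 2)
        * (‖z₁ t‖ ^ 2 - ‖z₂ t‖ ^ 2
          + ‖z₃ t‖ ^ 2 - ‖z₄ t‖ ^ 2)) t := by
  intro t
  have H1 := hasDerivAt_abs_sq (h1 t)
  have H2 := hasDerivAt_abs_sq (h2 t)
  have H3 := hasDerivAt_abs_sq (h3 t)
  have H4 := hasDerivAt_abs_sq (h4 t)
  refine (((H1.sub H2).add H3).sub H4).congr_deriv ?_
  simp only [Complex.sq_norm, Complex.normSq_apply, Complex.add_re, Complex.add_im,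
    Complex.sub_re, Complex.sub_im, Complex.mul_re, Complex.mul_im,
    Complex.ofReal_re, Complex.ofReal_im, Complex.conj_re, Complex.conj_im,
    Complex.re_ofNat, Complex.im_ofNat]
  ring
end

section
/- Under the SU(2)-invariant Cayley ODE system, the complex function u = z₁·conj(z₂) + z₃·conj(z₄) satisfies du/dt = 2(|z₁|²+|z₂|²+|z₃|²+|z₄|²)u. -/
open Complex ComplexConjugate

theorem stmt8
    (z₁ z₂ z₃ z₄ : ℝ → ℂ)
    (h1 : ∀ t, HasDerivAt z₁
      (z₁ t * ((‖z₁ t‖ ^ 2 + ‖z₂ t‖ ^ 2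
          + ‖z₃ t‖ ^ 2 - ‖z₄ t‖ ^ 2 : ℝ) : ℂ)
        + 2 * (conj (z₁ t * z₄ t - z₂ t * z₃ t) + z₂ t * z₃ t) * conj (z₄ t)) t)
    (h2 : ∀ t, HasDerivAt z₂
      (z₂ t * ((‖z₄ t‖ ^ 2 + ‖z₁ t‖ ^ 2
          + ‖z₂ t‖ ^ 2 - ‖z₃ t‖ ^ 2 : ℝ) : ℂ)
        - 2 * (conj (z₁ t * z₄ t - z₂ t * z₃ t) - z₁ t * z₄ t) * conj (z₃ t)) t)
    (h3 : ∀ t, HasDerivAt z₃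
      (z₃ t * ((‖z₃ t‖ ^ 2 + ‖z₄ t‖ ^ 2
          + ‖z₁ t‖ ^ 2 - ‖z₂ t‖ ^ 2 : ℝ) : ℂ)
        - 2 * (conj (z₁ t * z₄ t - z₂ t * z₃ t) - z₁ t * z₄ t) * conj (z₂ t)) t)
    (h4 : ∀ t, HasDerivAt z₄
      (z₄ t * ((‖z₂ t‖ ^ 2 + ‖z₃ t‖ ^ 2
          + ‖z₄ t‖ ^ 2 - ‖z₁ t‖ ^ 2 : ℝ) : ℂ)
        + 2 * (conj (z₁ t * z₄ t - z₂ t * z₃ t) + z₂ t * z₃ t) * conj (z₁ t)) t) :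
    ∀ t, HasDerivAt (fun s => z₁ s * conj (z₂ s) + z₃ s * conj (z₄ s))
      (((2 * (‖z₁ t‖ ^ 2 + ‖z₂ t‖ ^ 2
          + ‖z₃ t‖ ^ 2 + ‖z₄ t‖ ^ 2) : ℝ) : ℂ)
        * (z₁ t * conj (z₂ t) + z₃ t * conj (z₄ t))) t := by
  intro t
  have key : ∀ z : ℂ, ((‖z‖ : ℂ)) ^ 2 = z * conj z := by
    intro z
    rw [← Complex.ofReal_pow, Complex.sq_norm, Complex.mul_conj]
  have H := ((h1 t).mul ((h2 t).star)).add ((h3 t).mul ((h4 t).star))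
  convert H using 1
  · rfl
  · rfl
  simp only [Complex.star_def, map_add, map_sub, map_mul, Complex.conj_conj,
    Complex.conj_ofReal, map_ofNat]
  push_cast
  simp only [key]
  ring
end

section
/- Under the SU(2)-invariant Cayley ODE system, the real function u = Re(z₁z₄ - z₂z₃) satisfies du/dt = 2(|z₁|²+|z₂|²+|z₃|²+|z₄|²)u, and the complex function v = z₁·conj(z₃) + z₂·conj(z₄) satisfies dv/dt = 2(|z₁|²+|z₂|²+|z₃|²+|z₄|²)v. -/
open Complex ComplexConjugate

lemma keyD (a b c d : ℂ) :
    (a * ((‖a‖ ^ 2 + ‖b‖ ^ 2 + ‖c‖ ^ 2 - ‖d‖ ^ 2 : ℝ) : ℂ)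
        + 2 * (conj (a * d - b * c) + b * c) * conj d) * d
    + a * (d * ((‖b‖ ^ 2 + ‖c‖ ^ 2 + ‖d‖ ^ 2 - ‖a‖ ^ 2 : ℝ) : ℂ)
        + 2 * (conj (a * d - b * c) + b * c) * conj a)
    - ((b * ((‖d‖ ^ 2 + ‖a‖ ^ 2 + ‖b‖ ^ 2 - ‖c‖ ^ 2 : ℝ) : ℂ)
        - 2 * (conj (a * d - b * c) - a * d) * conj c) * c
      + b * (c * ((‖c‖ ^ 2 + ‖d‖ ^ 2 + ‖a‖ ^ 2 - ‖b‖ ^ 2 : ℝ) : ℂ)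
        - 2 * (conj (a * d - b * c) - a * d) * conj b))
    = ((2 * (‖a‖ ^ 2 + ‖b‖ ^ 2 + ‖c‖ ^ 2 + ‖d‖ ^ 2) : ℝ) : ℂ)
      * conj (a * d - b * c) := by
  have e : ∀ z : ℂ, ((‖z‖ : ℝ) : ℂ) ^ 2 = z * conj z := by
    intro z
    rw [← Complex.ofReal_pow, Complex.sq_norm, Complex.mul_conj]
  push_cast
  simp only [e, map_sub, map_mul]
  ring

lemma keyV (a b c d : ℂ) :
    (a * ((‖a‖ ^ 2 + ‖b‖ ^ 2 + ‖c‖ ^ 2 - ‖d‖ ^ 2 : ℝ) : ℂ)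
        + 2 * (conj (a * d - b * c) + b * c) * conj d) * conj c
    + a * conj (c * ((‖c‖ ^ 2 + ‖d‖ ^ 2 + ‖a‖ ^ 2 - ‖b‖ ^ 2 : ℝ) : ℂ)
        - 2 * (conj (a * d - b * c) - a * d) * conj b)
    + ((b * ((‖d‖ ^ 2 + ‖a‖ ^ 2 + ‖b‖ ^ 2 - ‖c‖ ^ 2 : ℝ) : ℂ)
        - 2 * (conj (a * d - b * c) - a * d) * conj c) * conj d
      + b * conj (d * ((‖b‖ ^ 2 + ‖c‖ ^ 2 + ‖d‖ ^ 2 - ‖a‖ ^ 2 : ℝ) : ℂ)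
        + 2 * (conj (a * d - b * c) + b * c) * conj a))
    = ((2 * (‖a‖ ^ 2 + ‖b‖ ^ 2 + ‖c‖ ^ 2 + ‖d‖ ^ 2) : ℝ) : ℂ)
      * (a * conj c + b * conj d) := by
  have e : ∀ z : ℂ, ((‖z‖ : ℝ) : ℂ) ^ 2 = z * conj z := by
    intro z
    rw [← Complex.ofReal_pow, Complex.sq_norm, Complex.mul_conj]
  simp only [map_sub, map_add, map_mul, Complex.conj_conj, Complex.conj_ofReal, map_ofNat]
  push_cast
  simp only [e, map_sub, map_mul]
  ring

theorem stmt9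
    (z₁ z₂ z₃ z₄ : ℝ → ℂ)
    (h1 : ∀ t, HasDerivAt z₁
      (z₁ t * ((‖z₁ t‖ ^ 2 + ‖z₂ t‖ ^ 2
          + ‖z₃ t‖ ^ 2 - ‖z₄ t‖ ^ 2 : ℝ) : ℂ)
        + 2 * (conj (z₁ t * z₄ t - z₂ t * z₃ t) + z₂ t * z₃ t) * conj (z₄ t)) t)
    (h2 : ∀ t, HasDerivAt z₂
      (z₂ t * ((‖z₄ t‖ ^ 2 + ‖z₁ t‖ ^ 2
          + ‖z₂ t‖ ^ 2 - ‖z₃ t‖ ^ 2 : ℝ) : ℂ)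
        - 2 * (conj (z₁ t * z₄ t - z₂ t * z₃ t) - z₁ t * z₄ t) * conj (z₃ t)) t)
    (h3 : ∀ t, HasDerivAt z₃
      (z₃ t * ((‖z₃ t‖ ^ 2 + ‖z₄ t‖ ^ 2
          + ‖z₁ t‖ ^ 2 - ‖z₂ t‖ ^ 2 : ℝ) : ℂ)
        - 2 * (conj (z₁ t * z₄ t - z₂ t * z₃ t) - z₁ t * z₄ t) * conj (z₂ t)) t)
    (h4 : ∀ t, HasDerivAt z₄
      (z₄ t * ((‖z₂ t‖ ^ 2 + ‖z₃ t‖ ^ 2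
          + ‖z₄ t‖ ^ 2 - ‖z₁ t‖ ^ 2 : ℝ) : ℂ)
        + 2 * (conj (z₁ t * z₄ t - z₂ t * z₃ t) + z₂ t * z₃ t) * conj (z₁ t)) t) :
    (∀ t, HasDerivAt (fun s => (z₁ s * z₄ s - z₂ s * z₃ s).re)
      (2 * (‖z₁ t‖ ^ 2 + ‖z₂ t‖ ^ 2
          + ‖z₃ t‖ ^ 2 + ‖z₄ t‖ ^ 2)
        * (z₁ t * z₄ t - z₂ t * z₃ t).re) t)
    ∧ (∀ t, HasDerivAt (fun s => z₁ s * conj (z₃ s) + z₂ s * conj (z₄ s))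
      (((2 * (‖z₁ t‖ ^ 2 + ‖z₂ t‖ ^ 2
          + ‖z₃ t‖ ^ 2 + ‖z₄ t‖ ^ 2) : ℝ) : ℂ)
        * (z₁ t * conj (z₃ t) + z₂ t * conj (z₄ t))) t) := by
  constructor
  · intro t
    have hw := ((h1 t).mul (h4 t)).sub ((h2 t).mul (h3 t))
    rw [keyD (z₁ t) (z₂ t) (z₃ t) (z₄ t)] at hw
    have hre : HasDerivAt (fun s => (z₁ s * z₄ s - z₂ s * z₃ s).re) _ t :=
      Complex.reCLM.hasFDerivAt.comp_hasDerivAt t hw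
    convert hre using 1
    simp [Complex.mul_re, Complex.conj_re, Complex.conj_im, ← Complex.ofReal_pow,
      Complex.ofReal_re, Complex.ofReal_im]
  · intro t
    have h3c := (h3 t).star
    have h4c := (h4 t).star
    simp only [Complex.star_def] at h3c h4c
    have hv := ((h1 t).mul h3c).add ((h2 t).mul h4c)
    rw [keyV (z₁ t) (z₂ t) (z₃ t) (z₄ t)] at hv
    exact hv
end

section
/- If x₁:ℝ→ℝ and z₁,z₂,z₃:ℝ→ℂ are differentiable and satisfy dx₁/dt = 0, dz₁/dt = -νz₁ - λ·conj(z₂z₃), dz₂/dt = μz₂ - λ·conj(z₃z₁), dz₃/dt = (ν-μ)z₃ - λ·conj(z₁z₂) for real constants λ, μ, ν, then d/dt(z₁z₂z₃) = -λ(|z₂|²|z₃|² + |z₃|²|z₁|² + |z₁|²|z₂|²) is real, and hence Im(z₁z₂z₃) is constant. -/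
open Complex ComplexConjugate

theorem stmt14 (lam μ ν : ℝ)
    (x₁ : ℝ → ℝ) (z₁ z₂ z₃ : ℝ → ℂ)
    (hx : ∀ t, HasDerivAt x₁ 0 t)
    (h1 : ∀ t, HasDerivAt z₁ (-(ν : ℂ) * z₁ t - (lam : ℂ) * conj (z₂ t * z₃ t)) t)
    (h2 : ∀ t, HasDerivAt z₂ ((μ : ℂ) * z₂ t - (lam : ℂ) * conj (z₃ t * z₁ t)) t)
    (h3 : ∀ t, HasDerivAt z₃ (((ν - μ : ℝ) : ℂ) * z₃ t - (lam : ℂ) * conj (z₁ t * z₂ t)) t) :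
    (∀ t, HasDerivAt (fun s => z₁ s * z₂ s * z₃ s)
      ((-(lam * (‖z₂ t‖ ^ 2 * ‖z₃ t‖ ^ 2
        + ‖z₃ t‖ ^ 2 * ‖z₁ t‖ ^ 2
        + ‖z₁ t‖ ^ 2 * ‖z₂ t‖ ^ 2) : ℝ) : ℂ)) t)
    ∧ (∀ t, (z₁ t * z₂ t * z₃ t).im = (z₁ 0 * z₂ 0 * z₃ 0).im) := by
  have key : ∀ t, HasDerivAt (fun s => z₁ s * z₂ s * z₃ s)
      ((-(lam * (‖z₂ t‖ ^ 2 * ‖z₃ t‖ ^ 2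
        + ‖z₃ t‖ ^ 2 * ‖z₁ t‖ ^ 2
        + ‖z₁ t‖ ^ 2 * ‖z₂ t‖ ^ 2) : ℝ) : ℂ)) t := by
    intro t
    have h := ((h1 t).mul (h2 t)).mul (h3 t)
    refine h.congr_deriv ?_
    have e : ∀ w : ℂ, ((‖w‖ : ℝ)^2 : ℂ) = w * conj w := by
      intro w
      rw [Complex.mul_conj, ← Complex.sq_norm]
      push_cast
      ring
    push_cast
    rw [e (z₂ t), e (z₃ t), e (z₁ t)]
    simp only [map_mul, Pi.mul_apply]
    push_cast
    ring
  refine ⟨key, fun t => ?_⟩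
  have hdiff : ∀ t, HasDerivAt (fun s => (z₁ s * z₂ s * z₃ s).im) 0 t := by
    intro t
    have h' := Complex.imCLM.hasFDerivAt.comp_hasDerivAt t (key t)
    refine h'.congr_deriv ?_
    simp [← Complex.ofReal_pow]
  have := is_const_of_deriv_eq_zero (f := fun s => (z₁ s * z₂ s * z₃ s).im)
    (fun s => (hdiff s).differentiableAt) (fun s => (hdiff s).deriv) t 0
  exact this
end

section
/- If x₁:ℝ→ℝ and z₁,z₂,z₃:ℝ→ℂ satisfy dx₁/dt = -3Im(z₁z₂z₃), dz₁/dt = z₁(|z₂|²-|z₃|²) + ix₁·conj(z₂z₃), dz₂/dt = z₂(|z₃|²-|z₁|²) + ix₁·conj(z₃z₁), dz₃/dt = z₃(|z₁|²-|z₂|²) + ix₁·conj(z₁z₂), then x₁² + |z₁|² + |z₂|² + |z₃|² is constant. -/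
open Complex ComplexConjugate

lemma normSq_hasDerivAt {z : ℝ → ℂ} {d : ℂ} {t : ℝ}
    (h : HasDerivAt z d t) :
    HasDerivAt (fun t => Complex.normSq (z t))
      (2 * ((z t).re * d.re + (z t).im * d.im)) t := by
  have hre : HasDerivAt (fun t => (z t).re) d.re t :=
    (Complex.reCLM.hasFDerivAt.comp_hasDerivAt t h)
  have him : HasDerivAt (fun t => (z t).im) d.im t :=
    (Complex.imCLM.hasFDerivAt.comp_hasDerivAt t h)
  have := (hre.mul hre).add (him.mul him)
  simp only [Complex.normSq_apply]
  exact this.congr_deriv (by ring)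

theorem stmt16
    (x₁ : ℝ → ℝ) (z₁ z₂ z₃ : ℝ → ℂ)
    (hx : ∀ t, HasDerivAt x₁ (-3 * (z₁ t * z₂ t * z₃ t).im) t)
    (h1 : ∀ t, HasDerivAt z₁
      (z₁ t * ((‖z₂ t‖ ^ 2 - ‖z₃ t‖ ^ 2 : ℝ) : ℂ)
        + I * (x₁ t : ℂ) * conj (z₂ t * z₃ t)) t)
    (h2 : ∀ t, HasDerivAt z₂
      (z₂ t * ((‖z₃ t‖ ^ 2 - ‖z₁ t‖ ^ 2 : ℝ) : ℂ)
        + I * (x₁ t : ℂ) * conj (z₃ t * z₁ t)) t)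
    (h3 : ∀ t, HasDerivAt z₃
      (z₃ t * ((‖z₁ t‖ ^ 2 - ‖z₂ t‖ ^ 2 : ℝ) : ℂ)
        + I * (x₁ t : ℂ) * conj (z₁ t * z₂ t)) t) :
    ∀ t, x₁ t ^ 2 + ‖z₁ t‖ ^ 2 + ‖z₂ t‖ ^ 2
        + ‖z₃ t‖ ^ 2
      = x₁ 0 ^ 2 + ‖z₁ 0‖ ^ 2 + ‖z₂ 0‖ ^ 2
        + ‖z₃ 0‖ ^ 2 := by
  have key : ∀ t, HasDerivAt (fun t => x₁ t ^ 2 + Complex.normSq (z₁ t)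
      + Complex.normSq (z₂ t) + Complex.normSq (z₃ t)) 0 t := by
    intro t
    have hxd := ((hx t).pow 2)
    have hd1 := normSq_hasDerivAt (h1 t)
    have hd2 := normSq_hasDerivAt (h2 t)
    have hd3 := normSq_hasDerivAt (h3 t)
    have H := ((hxd.add hd1).add hd2).add hd3
    refine H.congr_deriv ?_
    simp only [Complex.sq_norm, Complex.normSq_apply, Complex.add_re, Complex.add_im,
      Complex.mul_re, Complex.mul_im, Complex.ofReal_re, Complex.ofReal_im,
      Complex.I_re, Complex.I_im, Complex.conj_re, Complex.conj_im, map_mul]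
    ring
  intro t
  have hconst : ∀ s, x₁ s ^ 2 + Complex.normSq (z₁ s) + Complex.normSq (z₂ s)
      + Complex.normSq (z₃ s)
      = x₁ 0 ^ 2 + Complex.normSq (z₁ 0) + Complex.normSq (z₂ 0)
      + Complex.normSq (z₃ 0) := by
    intro s
    exact is_const_of_deriv_eq_zero
      (fun u => (key u).differentiableAt) (fun u => (key u).deriv) s 0
  have := hconst t
  simpa [Complex.sq_norm] using this
end

section
/- Let a₁, a₂, a₃, a₄ be integers with a₁+a₂+a₃+a₄ = 0. If z₁,z₂,z₃,z₄:ℝ→ℂ satisfy dz₁/dt = a₁·conj(z₂z₃z₄) + (1/2)z₁((a₄-a₃)|z₂|² + (a₂-a₄)|z₃|² + (a₃-a₂)|z₄|²) and the three cyclic analogues (dz₂/dt = a₂·conj(z₃z₄z₁) + (1/2)z₂((a₄-a₁)|z₃|² + (a₁-a₃)|z₄|² + (a₃-a₄)|z₁|²), dz₃/dt = a₃·conj(z₄z₁z₂) + (1/2)z₃((a₂-a₁)|z₄|² + (a₄-a₂)|z₁|² + (a₁-a₄)|z₂|²), dz₄/dt = a₄·conj(z₁z₂z₃) + (1/2)z₄((a₂-a₃)|z₁|²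 + (a₃-a₁)|z₂|² + (a₁-a₂)|z₃|²)), then |z₁|² + |z₂|² + |z₃|² + |z₄|² is constant. -/
open Complex ComplexConjugate

lemma stmt18_aux (z : ℝ → ℂ) (d : ℂ) (t : ℝ) (h : HasDerivAt z d t) :
    HasDerivAt (fun t => (z t * conj (z t)).re) ((d * conj (z t) + z t * conj d).re) t := by
  have hc : HasDerivAt (fun t => conj (z t)) (conj d) t :=
    Complex.conjCLE.toContinuousLinearMap.hasFDerivAt.comp_hasDerivAt t h
  exact Complex.reCLM.hasFDerivAt.comp_hasDerivAt t (h.mul hc)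

theorem stmt18
    (a₁ a₂ a₃ a₄ : ℤ) (ha : a₁ + a₂ + a₃ + a₄ = 0)
    (z₁ z₂ z₃ z₄ : ℝ → ℂ)
    (h1 : ∀ t, HasDerivAt z₁
      ((a₁ : ℂ) * conj (z₂ t * z₃ t * z₄ t)
        + (1 / 2 : ℂ) * z₁ t * ((((a₄ - a₃ : ℤ) : ℝ) * ‖z₂ t‖ ^ 2
          + ((a₂ - a₄ : ℤ) : ℝ) * ‖z₃ t‖ ^ 2
          + ((a₃ - a₂ : ℤ) : ℝ) * ‖z₄ t‖ ^ 2 : ℝ) : ℂ)) t)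
    (h2 : ∀ t, HasDerivAt z₂
      ((a₂ : ℂ) * conj (z₃ t * z₄ t * z₁ t)
        + (1 / 2 : ℂ) * z₂ t * ((((a₄ - a₁ : ℤ) : ℝ) * ‖z₃ t‖ ^ 2
          + ((a₁ - a₃ : ℤ) : ℝ) * ‖z₄ t‖ ^ 2
          + ((a₃ - a₄ : ℤ) : ℝ) * ‖z₁ t‖ ^ 2 : ℝ) : ℂ)) t)
    (h3 : ∀ t, HasDerivAt z₃
      ((a₃ : ℂ) * conj (z₄ t * z₁ t * z₂ t)
        + (1 / 2 : ℂ) * z₃ t * ((((a₂ - a₁ : ℤ) : ℝ) * ‖z₄ t‖ ^ 2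
          + ((a₄ - a₂ : ℤ) : ℝ) * ‖z₁ t‖ ^ 2
          + ((a₁ - a₄ : ℤ) : ℝ) * ‖z₂ t‖ ^ 2 : ℝ) : ℂ)) t)
    (h4 : ∀ t, HasDerivAt z₄
      ((a₄ : ℂ) * conj (z₁ t * z₂ t * z₃ t)
        + (1 / 2 : ℂ) * z₄ t * ((((a₂ - a₃ : ℤ) : ℝ) * ‖z₁ t‖ ^ 2
          + ((a₃ - a₁ : ℤ) : ℝ) * ‖z₂ t‖ ^ 2
          + ((a₁ - a₂ : ℤ) : ℝ) * ‖z₃ t‖ ^ 2 : ℝ) : ℂ)) t) :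
    ∀ t, ‖z₁ t‖ ^ 2 + ‖z₂ t‖ ^ 2
        + ‖z₃ t‖ ^ 2 + ‖z₄ t‖ ^ 2
      = ‖z₁ 0‖ ^ 2 + ‖z₂ 0‖ ^ 2
        + ‖z₃ 0‖ ^ 2 + ‖z₄ 0‖ ^ 2 := by
  have ha' : (a₁ : ℂ) + a₂ + a₃ + a₄ = 0 := by exact_mod_cast ha
  set F : ℝ → ℝ := fun t => (z₁ t * conj (z₁ t)).re + (z₂ t * conj (z₂ t)).re
      + (z₃ t * conj (z₃ t)).re + (z₄ t * conj (z₄ t)).re with hF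
  have key : ∀ t, HasDerivAt F 0 t := by
    intro t
    have A1 := stmt18_aux z₁ _ t (h1 t)
    have A2 := stmt18_aux z₂ _ t (h2 t)
    have A3 := stmt18_aux z₃ _ t (h3 t)
    have A4 := stmt18_aux z₄ _ t (h4 t)
    have hsum := ((A1.add A2).add A3).add A4
    convert hsum using 1
    case e'_4 => rfl
    case e'_5 => rfl
    case e'_8 => rfl
    set w₁ := z₁ t; set w₂ := z₂ t; set w₃ := z₃ t; set w₄ := z₄ t
    rw [← Complex.add_re, ← Complex.add_re, ← Complex.add_re]
    have habs : ∀ z : ℂ, ((‖z‖ ^ 2 : ℝ) : ℂ) = z * conj z := by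
      intro z
      rw [Complex.mul_conj, Complex.sq_norm]
    have hz : ((a₁ : ℂ) * conj (w₂ * w₃ * w₄)
        + (1 / 2 : ℂ) * w₁ * ((((a₄ - a₃ : ℤ) : ℝ) * ‖w₂‖ ^ 2
          + ((a₂ - a₄ : ℤ) : ℝ) * ‖w₃‖ ^ 2
          + ((a₃ - a₂ : ℤ) : ℝ) * ‖w₄‖ ^ 2 : ℝ) : ℂ)) * conj w₁
        + w₁ * conj ((a₁ : ℂ) * conj (w₂ * w₃ * w₄)
        + (1 / 2 : ℂ) * w₁ * ((((a₄ - a₃ : ℤ) : ℝ) * ‖w₂‖ ^ 2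
          + ((a₂ - a₄ : ℤ) : ℝ) * ‖w₃‖ ^ 2
          + ((a₃ - a₂ : ℤ) : ℝ) * ‖w₄‖ ^ 2 : ℝ) : ℂ))
        + (((a₂ : ℂ) * conj (w₃ * w₄ * w₁)
        + (1 / 2 : ℂ) * w₂ * ((((a₄ - a₁ : ℤ) : ℝ) * ‖w₃‖ ^ 2
          + ((a₁ - a₃ : ℤ) : ℝ) * ‖w₄‖ ^ 2
          + ((a₃ - a₄ : ℤ) : ℝ) * ‖w₁‖ ^ 2 : ℝ) : ℂ)) * conj w₂
        + w₂ * conj ((a₂ : ℂ) * conj (w₃ * w₄ * w₁)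
        + (1 / 2 : ℂ) * w₂ * ((((a₄ - a₁ : ℤ) : ℝ) * ‖w₃‖ ^ 2
          + ((a₁ - a₃ : ℤ) : ℝ) * ‖w₄‖ ^ 2
          + ((a₃ - a₄ : ℤ) : ℝ) * ‖w₁‖ ^ 2 : ℝ) : ℂ)))
        + (((a₃ : ℂ) * conj (w₄ * w₁ * w₂)
        + (1 / 2 : ℂ) * w₃ * ((((a₂ - a₁ : ℤ) : ℝ) * ‖w₄‖ ^ 2
          + ((a₄ - a₂ : ℤ) : ℝ) * ‖w₁‖ ^ 2
          + ((a₁ - a₄ : ℤ) : ℝ) * ‖w₂‖ ^ 2 : ℝ) : ℂ)) * conj w₃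
        + w₃ * conj ((a₃ : ℂ) * conj (w₄ * w₁ * w₂)
        + (1 / 2 : ℂ) * w₃ * ((((a₂ - a₁ : ℤ) : ℝ) * ‖w₄‖ ^ 2
          + ((a₄ - a₂ : ℤ) : ℝ) * ‖w₁‖ ^ 2
          + ((a₁ - a₄ : ℤ) : ℝ) * ‖w₂‖ ^ 2 : ℝ) : ℂ)))
        + (((a₄ : ℂ) * conj (w₁ * w₂ * w₃)
        + (1 / 2 : ℂ) * w₄ * ((((a₂ - a₃ : ℤ) : ℝ) * ‖w₁‖ ^ 2
          + ((a₃ - a₁ : ℤ) : ℝ) * ‖w₂‖ ^ 2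
          + ((a₁ - a₂ : ℤ) : ℝ) * ‖w₃‖ ^ 2 : ℝ) : ℂ)) * conj w₄
        + w₄ * conj ((a₄ : ℂ) * conj (w₁ * w₂ * w₃)
        + (1 / 2 : ℂ) * w₄ * ((((a₂ - a₃ : ℤ) : ℝ) * ‖w₁‖ ^ 2
          + ((a₃ - a₁ : ℤ) : ℝ) * ‖w₂‖ ^ 2
          + ((a₁ - a₂ : ℤ) : ℝ) * ‖w₃‖ ^ 2 : ℝ) : ℂ))) = 0 := by
      simp only [Complex.ofReal_add, Complex.ofReal_mul, Complex.ofReal_intCast, habs,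
        map_add, map_mul, map_sub, Complex.conj_conj, map_intCast, Complex.conj_ofReal,
        map_div₀, map_one, map_ofNat]
      push_cast
      linear_combination (w₁ * w₂ * w₃ * w₄ + conj w₁ * conj w₂ * conj w₃ * conj w₄) * ha'
    rw [hz, Complex.zero_re]
  have hdiff : Differentiable ℝ F := fun t => (key t).differentiableAt
  have hconst : ∀ t, F t = F 0 := by
    intro t
    exact is_const_of_deriv_eq_zero hdiff (fun x => (key x).deriv) t 0
  have hFt : ∀ t, F t = ‖z₁ t‖ ^ 2 + ‖z₂ t‖ ^ 2
      + ‖z₃ t‖ ^ 2 + ‖z₄ t‖ ^ 2 := by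
    intro t
    simp [hF, Complex.mul_conj, Complex.sq_norm]
  intro t
  rw [← hFt, ← hFt, hconst]
end

section
/- Under the U(1)²-invariant Cayley cone ODE system with integers a₁+a₂+a₃+a₄ = 0, d/dt(z₁z₂z₃z₄) = a₁|z₂z₃z₄|² + a₂|z₃z₄z₁|² + a₃|z₄z₁z₂|² + a₄|z₁z₂z₃|², which is real; hence Im(z₁z₂z₃z₄) is constant in t. -/
open Complex ComplexConjugate

theorem stmt19
    (a₁ a₂ a₃ a₄ : ℤ) (ha : a₁ + a₂ + a₃ + a₄ = 0)
    (z₁ z₂ z₃ z₄ : ℝ → ℂ)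
    (h1 : ∀ t, HasDerivAt z₁
      ((a₁ : ℂ) * conj (z₂ t * z₃ t * z₄ t)
        + (1 / 2 : ℂ) * z₁ t * ((((a₄ - a₃ : ℤ) : ℝ) * ‖z₂ t‖ ^ 2
          + ((a₂ - a₄ : ℤ) : ℝ) * ‖z₃ t‖ ^ 2
          + ((a₃ - a₂ : ℤ) : ℝ) * ‖z₄ t‖ ^ 2 : ℝ) : ℂ)) t)
    (h2 : ∀ t, HasDerivAt z₂
      ((a₂ : ℂ) * conj (z₃ t * z₄ t * z₁ t)
        + (1 / 2 : ℂ) * z₂ t * ((((a₄ - a₁ : ℤ) : ℝ) * ‖z₃ t‖ ^ 2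
          + ((a₁ - a₃ : ℤ) : ℝ) * ‖z₄ t‖ ^ 2
          + ((a₃ - a₄ : ℤ) : ℝ) * ‖z₁ t‖ ^ 2 : ℝ) : ℂ)) t)
    (h3 : ∀ t, HasDerivAt z₃
      ((a₃ : ℂ) * conj (z₄ t * z₁ t * z₂ t)
        + (1 / 2 : ℂ) * z₃ t * ((((a₂ - a₁ : ℤ) : ℝ) * ‖z₄ t‖ ^ 2
          + ((a₄ - a₂ : ℤ) : ℝ) * ‖z₁ t‖ ^ 2
          + ((a₁ - a₄ : ℤ) : ℝ) * ‖z₂ t‖ ^ 2 : ℝ) : ℂ)) t)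
    (h4 : ∀ t, HasDerivAt z₄
      ((a₄ : ℂ) * conj (z₁ t * z₂ t * z₃ t)
        + (1 / 2 : ℂ) * z₄ t * ((((a₂ - a₃ : ℤ) : ℝ) * ‖z₁ t‖ ^ 2
          + ((a₃ - a₁ : ℤ) : ℝ) * ‖z₂ t‖ ^ 2
          + ((a₁ - a₂ : ℤ) : ℝ) * ‖z₃ t‖ ^ 2 : ℝ) : ℂ)) t) :
    (∀ t, HasDerivAt (fun s => z₁ s * z₂ s * z₃ s * z₄ s)
      ((((a₁ : ℝ) * ‖z₂ t * z₃ t * z₄ t‖ ^ 2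
        + (a₂ : ℝ) * ‖z₃ t * z₄ t * z₁ t‖ ^ 2
        + (a₃ : ℝ) * ‖z₄ t * z₁ t * z₂ t‖ ^ 2
        + (a₄ : ℝ) * ‖z₁ t * z₂ t * z₃ t‖ ^ 2 : ℝ) : ℂ)) t)
    ∧ (∀ t, (z₁ t * z₂ t * z₃ t * z₄ t).im = (z₁ 0 * z₂ 0 * z₃ 0 * z₄ 0).im) := by

  have hP : ∀ t, HasDerivAt (fun s => z₁ s * z₂ s * z₃ s * z₄ s)
      ((((a₁ : ℝ) * ‖z₂ t * z₃ t * z₄ t‖ ^ 2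
        + (a₂ : ℝ) * ‖z₃ t * z₄ t * z₁ t‖ ^ 2
        + (a₃ : ℝ) * ‖z₄ t * z₁ t * z₂ t‖ ^ 2
        + (a₄ : ℝ) * ‖z₁ t * z₂ t * z₃ t‖ ^ 2 : ℝ) : ℂ)) t := by
    intro t
    have H := (((h1 t).mul (h2 t)).mul (h3 t)).mul (h4 t)
    refine H.congr_deriv ?_
    have e1 : ((‖z₁ t‖ : ℝ) : ℂ) ^ 2 = z₁ t * conj (z₁ t) := by
      rw [← Complex.ofReal_pow, Complex.sq_norm, Complex.mul_conj]
    have e2 : ((‖z₂ t‖ : ℝ) : ℂ) ^ 2 = z₂ t * conj (z₂ t) := by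
      rw [← Complex.ofReal_pow, Complex.sq_norm, Complex.mul_conj]
    have e3 : ((‖z₃ t‖ : ℝ) : ℂ) ^ 2 = z₃ t * conj (z₃ t) := by
      rw [← Complex.ofReal_pow, Complex.sq_norm, Complex.mul_conj]
    have e4 : ((‖z₄ t‖ : ℝ) : ℂ) ^ 2 = z₄ t * conj (z₄ t) := by
      rw [← Complex.ofReal_pow, Complex.sq_norm, Complex.mul_conj]
    push_cast [map_mul]
    simp only [norm_mul, Complex.ofReal_mul, mul_pow, Pi.mul_apply]
    rw [e1, e2, e3, e4]
    ring
  refine ⟨hP, fun t => ?_⟩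
  have him : ∀ s, HasDerivAt (fun u => (z₁ u * z₂ u * z₃ u * z₄ u).im) 0 s := by
    intro s
    have h0 := Complex.imCLM.hasFDerivAt.comp_hasDerivAt s (hP s)
    simpa only [Function.comp_def, Complex.imCLM_apply, Complex.ofReal_im] using h0
  have := fun s => (him s).deriv
  have hc : ∀ x y : ℝ, (fun u => (z₁ u * z₂ u * z₃ u * z₄ u).im) x
      = (fun u => (z₁ u * z₂ u * z₃ u * z₄ u).im) y := fun x y =>
    is_const_of_deriv_eq_zero (fun u => (him u).differentiableAt) (fun u => (him u).deriv) x y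
  exact hc t 0
end
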